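/- Let a < b be reals and let Φ : [0,∞) → [0,∞) be convex, strictly increasing and continuous with Φ(0) = 0 and Φ(A·B) ≤ Φ(A)·Φ(B) for all A > 0, B > 0. Let f : [a,b) → ℝ be uniformly convex with modulus Φ, i.e. t·f(x) + (1−t)·f(y) ≥ f(t·x + (1−t)·y) + t·(1−t)·Φ(|x−y|) for all x, y ∈ [a,b) and t ∈ [0,1]. Let n ≥ 2 be an integer, let x₁,…,xₙ ∈ [a,b), and set x̄ = (1/n)·Σ_{i=1}^n xᵢ and d = (1/n)·Σ_{i=1}^n f(xᵢ). Then max_{1≤k≤n} Φ(|xₖ − x̄|) ≤ (n·Φ(n−1)/(n−1+Φ(n−1))) · (1/n)·Σ_{i=1}^n Φ(|xᵢ − x̄|) ≤ (n·Φ(n−1)/(n−1+Φ(n−1))) · (d − f(x̄)). -/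

import Mathlib

lemma uc_convexOn (a b : ℝ) (Φ : ℝ → ℝ)
    (hΦnonneg : ∀ x ∈ Set.Ici (0:ℝ), 0 ≤ Φ x)
    (f : ℝ → ℝ)
    (hf : ∀ x ∈ Set.Ico a b, ∀ y ∈ Set.Ico a b, ∀ t ∈ Set.Icc (0:ℝ) 1,
      f (t * x + (1 - t) * y) + t * (1 - t) * Φ (|x - y|) ≤ t * f x + (1 - t) * f y) :
    ConvexOn ℝ (Set.Ico a b) f := by
  refine ⟨convex_Ico a b, ?_⟩
  intro x hx y hy p q hp hq hpq
  have h1 : q = 1 - p := by linarith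
  have h2 := hf x hx y hy p ⟨hp, by linarith⟩
  have h3 : 0 ≤ Φ (|x - y|) := hΦnonneg _ (Set.mem_Ici.mpr (abs_nonneg _))
  have h4 : 0 ≤ p * (1 - p) := mul_nonneg hp (by linarith)
  simp only [smul_eq_mul, h1]
  nlinarith [mul_nonneg h4 h3]

lemma uc_support (a b : ℝ) (Φ : ℝ → ℝ)
    (hΦ0 : Φ 0 = 0)
    (hΦnonneg : ∀ x ∈ Set.Ici (0:ℝ), 0 ≤ Φ x)
    (f : ℝ → ℝ)
    (hf : ∀ x ∈ Set.Ico a b, ∀ y ∈ Set.Ico a b, ∀ t ∈ Set.Icc (0:ℝ) 1,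
      f (t * x + (1 - t) * y) + t * (1 - t) * Φ (|x - y|) ≤ t * f x + (1 - t) * f y)
    (c : ℝ) (hca : a < c) (hcb : c < b) :
    ∃ s : ℝ, ∀ y ∈ Set.Ico a b, f c + s * (y - c) + Φ (|y - c|) ≤ f y := by
  have hconv := uc_convexOn a b Φ hΦnonneg f hf
  have hcmem : c ∈ Set.Ico a b := ⟨hca.le, hcb⟩
  set T : Set ℝ := (fun w => (f w - f c) / (w - c)) '' Set.Ioo c b with hT
  have hTne : T.Nonempty := ⟨_, ⟨(c + b) / 2, ⟨by linarith, by linarith⟩, rfl⟩⟩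
  have u₀ : ℝ := 0
  have hbdd : BddBelow T := by
    refine ⟨(f c - f ((a + c)/2)) / (c - (a + c)/2), ?_⟩
    rintro r ⟨w, hw, rfl⟩
    have h := hconv.slope_mono_adjacent (x := (a + c)/2) (y := c) (z := w)
      ⟨by linarith, by linarith [hw.2]⟩ ⟨by linarith [hw.1], hw.2⟩
      (by linarith) hw.1
    simpa using h
  set s := sInf T with hs
  refine ⟨s, ?_⟩
  intro y hy
  rcases eq_or_ne y c with rfl | hyc
  · simp [hΦ0]
  -- key: for all τ ∈ (0,1], f c + s*(y-c) + (1-τ)*Φ(|y-c|) ≤ f y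
  have key : ∀ τ : ℝ, 0 < τ → τ ≤ 1 →
      f c + s * (y - c) + (1 - τ) * Φ (|y - c|) ≤ f y := by
    intro τ hτ0 hτ1
    have h2 := hf y hy c hcmem τ ⟨hτ0.le, hτ1⟩
    set p := τ * y + (1 - τ) * c with hp
    have hpc : p - c = τ * (y - c) := by ring
    have hpmem : p ∈ Set.Ico a b := by
      constructor
      · nlinarith [hy.1, hca]
      · nlinarith [hy.2, hcb]
    -- f y ≥ f c + (f p - f c)/τ + (1-τ)*Φ(|y-c|)
    have h3 : f c + (f p - f c) / τ + (1 - τ) * Φ (|y - c|) ≤ f y := by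
      have : (f p - f c) / τ ≤ f y - f c - (1 - τ) * Φ (|y - c|) := by
        rw [div_le_iff₀ hτ0]; nlinarith
      linarith
    have h4 : (f p - f c) / τ = (y - c) * ((f p - f c) / (p - c)) := by
      have hyc' : y - c ≠ 0 := sub_ne_zero.mpr hyc
      rw [hpc]
      field_simp
    have h5 : s * (y - c) ≤ (f p - f c) / τ := by
      rw [h4]
      rcases lt_or_gt_of_ne hyc with hlt | hgt
      · -- y < c, p < c : slope(c,p) ≤ s
        have hpltc : p < c := by nlinarith
        have hple : ∀ r ∈ T, (f p - f c) / (p - c) ≤ r := by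
          rintro r ⟨w, hw, rfl⟩
          have := hconv.slope_mono_adjacent (x := p) (y := c) (z := w)
            hpmem ⟨by linarith [hw.1], hw.2⟩ hpltc hw.1
          calc (f p - f c) / (p - c) = (f c - f p) / (c - p) := by
                rw [div_eq_div_iff (by linarith) (by linarith)]; ring
            _ ≤ _ := this
        have hles : (f p - f c) / (p - c) ≤ s := le_csInf hTne hple
        nlinarith [hles]
      · -- y > c, p > c : s ≤ slope(c,p)
        have hpgtc : c < p := by nlinarith
        have hmem : (f p - f c) / (p - c) ∈ T := ⟨p, ⟨hpgtc, hpmem.2⟩, rfl⟩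
        have := csInf_le hbdd hmem
        nlinarith [this]
    linarith
  -- ε-argument
  by_contra hcon
  push_neg at hcon
  set ε := (f c + s * (y - c) + Φ (|y - c|)) - f y with hε
  have hε0 : 0 < ε := by linarith
  have hΦy : 0 ≤ Φ (|y - c|) := hΦnonneg _ (Set.mem_Ici.mpr (abs_nonneg _))
  set τ := min 1 (ε / (Φ (|y - c|) + 1)) with hτ
  have hτ0 : 0 < τ := lt_min one_pos (div_pos hε0 (by linarith))
  have hτ1 : τ ≤ 1 := min_le_left _ _
  have h := key τ hτ0 hτ1
  have hτΦ : τ * Φ (|y - c|) < ε := by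
    calc τ * Φ (|y - c|) ≤ (ε / (Φ (|y - c|) + 1)) * Φ (|y - c|) :=
          mul_le_mul_of_nonneg_right (min_le_right _ _) hΦy
      _ < ε := by
          rw [div_mul_eq_mul_div, div_lt_iff₀ (by linarith)]
          nlinarith
  nlinarith

lemma uc_jensen (a b : ℝ) (Φ : ℝ → ℝ)
    (hΦ0 : Φ 0 = 0)
    (hΦnonneg : ∀ x ∈ Set.Ici (0:ℝ), 0 ≤ Φ x)
    (f : ℝ → ℝ)
    (hf : ∀ x ∈ Set.Ico a b, ∀ y ∈ Set.Ico a b, ∀ t ∈ Set.Icc (0:ℝ) 1,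
      f (t * x + (1 - t) * y) + t * (1 - t) * Φ (|x - y|) ≤ t * f x + (1 - t) * f y)
    (n : ℕ) (hn : 2 ≤ n) (x : ℕ → ℝ)
    (hx : ∀ i ∈ Finset.Icc 1 n, x i ∈ Set.Ico a b)
    (xbar : ℝ)
    (hxbar : xbar = (1 / n) * ∑ i ∈ Finset.Icc 1 n, x i) :
    f xbar + (1 / n) * ∑ i ∈ Finset.Icc 1 n, Φ (|x i - xbar|)
      ≤ (1 / n) * ∑ i ∈ Finset.Icc 1 n, f (x i) := by
  have hn1 : 1 ≤ n := by omega
  have hN : (0:ℝ) < n := by positivity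
  have hcard : (Finset.Icc 1 n).card = n := by
    rw [Nat.card_Icc]; omega
  have hsum : ∑ i ∈ Finset.Icc 1 n, x i = n * xbar := by
    rw [hxbar]; field_simp
  have hax : a ≤ xbar := by
    have h1 : (n:ℝ) * a ≤ ∑ i ∈ Finset.Icc 1 n, x i := by
      calc (n:ℝ) * a = ∑ _i ∈ Finset.Icc 1 n, a := by
            rw [Finset.sum_const, hcard, nsmul_eq_mul]
        _ ≤ _ := Finset.sum_le_sum fun i hi => (hx i hi).1
    rw [hsum] at h1
    nlinarith
  have hxb : xbar < b := by
    have h1 : ∑ i ∈ Finset.Icc 1 n, x i < (n:ℝ) * b := by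
      calc ∑ i ∈ Finset.Icc 1 n, x i < ∑ _i ∈ Finset.Icc 1 n, b :=
            Finset.sum_lt_sum_of_nonempty (Finset.nonempty_Icc.mpr hn1)
              fun i hi => (hx i hi).2
        _ = (n:ℝ) * b := by rw [Finset.sum_const, hcard, nsmul_eq_mul]
    rw [hsum] at h1
    nlinarith
  rcases eq_or_lt_of_le hax with heq | hlt
  · -- xbar = a : all points equal a
    have hall : ∀ i ∈ Finset.Icc 1 n, x i = a := by
      have h0 : ∑ i ∈ Finset.Icc 1 n, (x i - a) = 0 := by
        rw [Finset.sum_sub_distrib, Finset.sum_const, hcard, nsmul_eq_mul, hsum, ← heq]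
        ring
      intro i hi
      have := (Finset.sum_eq_zero_iff_of_nonneg
        (fun j hj => by linarith [(hx j hj).1])).mp h0 i hi
      linarith
    have hΦsum : ∑ i ∈ Finset.Icc 1 n, Φ (|x i - xbar|) = 0 :=
      Finset.sum_eq_zero fun i hi => by rw [hall i hi, ← heq, sub_self, abs_zero, hΦ0]
    have hfsum : ∑ i ∈ Finset.Icc 1 n, f (x i) = n * f a := by
      rw [Finset.sum_congr rfl fun i hi => by rw [hall i hi], Finset.sum_const, hcard,
        nsmul_eq_mul]
    rw [hΦsum, hfsum, ← heq]
    field_simp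
    linarith
  · obtain ⟨s, hs⟩ := uc_support a b Φ hΦ0 hΦnonneg f hf xbar hlt hxb
    have key := Finset.sum_le_sum fun i hi => hs (x i) (hx i hi)
    have e1 : ∑ i ∈ Finset.Icc 1 n, (x i - xbar) = 0 := by
      rw [Finset.sum_sub_distrib, Finset.sum_const, hcard, nsmul_eq_mul, hsum]; ring
    have e2 : ∑ i ∈ Finset.Icc 1 n, (f xbar + s * (x i - xbar) + Φ (|x i - xbar|))
        = n * f xbar + ∑ i ∈ Finset.Icc 1 n, Φ (|x i - xbar|) := by
      rw [Finset.sum_add_distrib, Finset.sum_add_distrib, ← Finset.mul_sum, e1,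
        Finset.sum_const, hcard, nsmul_eq_mul]
      ring
    rw [e2] at key
    have h2 := mul_le_mul_of_nonneg_left key (le_of_lt (one_div_pos.mpr hN))
    have h3 : (1/(n:ℝ)) * (n * f xbar + ∑ i ∈ Finset.Icc 1 n, Φ (|x i - xbar|))
        = f xbar + (1/n) * ∑ i ∈ Finset.Icc 1 n, Φ (|x i - xbar|) := by
      field_simp
    linarith [h2, h3.symm.le]


/-- Theorem 5 of the paper: deviation bound for `f` uniformly convex with a
convex, submultiplicative modulus `Φ`. -/
theorem stmt_4 (a b : ℝ) (hab : a < b) (Φ : ℝ → ℝ)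
    (hΦ0 : Φ 0 = 0)
    (hΦnonneg : ∀ x ∈ Set.Ici (0:ℝ), 0 ≤ Φ x)
    (hΦconv : ConvexOn ℝ (Set.Ici 0) Φ)
    (hΦmono : StrictMonoOn Φ (Set.Ici 0))
    (hΦcont : ContinuousOn Φ (Set.Ici 0))
    (hΦsub : ∀ A B : ℝ, 0 < A → 0 < B → Φ (A * B) ≤ Φ A * Φ B)
    (f : ℝ → ℝ)
    (hf : ∀ x ∈ Set.Ico a b, ∀ y ∈ Set.Ico a b, ∀ t ∈ Set.Icc (0:ℝ) 1,
      f (t * x + (1 - t) * y) + t * (1 - t) * Φ (|x - y|)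
        ≤ t * f x + (1 - t) * f y)
    (n : ℕ) (hn : 2 ≤ n) (x : ℕ → ℝ)
    (hx : ∀ i ∈ Finset.Icc 1 n, x i ∈ Set.Ico a b)
    (xbar d : ℝ)
    (hxbar : xbar = (1 / n) * ∑ i ∈ Finset.Icc 1 n, x i)
    (hd : d = (1 / n) * ∑ i ∈ Finset.Icc 1 n, f (x i)) :
    (∀ k ∈ Finset.Icc 1 n,
      Φ (|x k - xbar|) ≤ (n * Φ ((n:ℝ) - 1) / ((n:ℝ) - 1 + Φ ((n:ℝ) - 1))) *
        ((1 / n) * ∑ i ∈ Finset.Icc 1 n, Φ (|x i - xbar|))) ∧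
    (n * Φ ((n:ℝ) - 1) / ((n:ℝ) - 1 + Φ ((n:ℝ) - 1))) *
        ((1 / n) * ∑ i ∈ Finset.Icc 1 n, Φ (|x i - xbar|))
      ≤ (n * Φ ((n:ℝ) - 1) / ((n:ℝ) - 1 + Φ ((n:ℝ) - 1))) * (d - f xbar) := by
  have hN : (0:ℝ) < n := by positivity
  have hN2 : (2:ℝ) ≤ n := by exact_mod_cast hn
  have hn1R : (1:ℝ) ≤ (n:ℝ) - 1 := by linarith
  have hn1pos : (0:ℝ) < (n:ℝ) - 1 := by linarith
  have hcard : (Finset.Icc 1 n).card = n := by rw [Nat.card_Icc]; omega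
  have hP : 0 < Φ ((n:ℝ) - 1) := by
    have := hΦmono (Set.mem_Ici.mpr le_rfl) (Set.mem_Ici.mpr hn1pos.le) hn1pos
    rwa [hΦ0] at this
  set P := Φ ((n:ℝ) - 1) with hPdef
  have hden : (0:ℝ) < (n:ℝ) - 1 + P := by linarith
  have hC : (0:ℝ) ≤ n * P / ((n:ℝ) - 1 + P) := by positivity
  have hsum : ∑ i ∈ Finset.Icc 1 n, x i = n * xbar := by
    rw [hxbar]; field_simp
  have hΦi : ∀ i ∈ Finset.Icc 1 n, 0 ≤ Φ (|x i - xbar|) :=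
    fun i _ => hΦnonneg _ (Set.mem_Ici.mpr (abs_nonneg _))
  have hSnn : 0 ≤ ∑ i ∈ Finset.Icc 1 n, Φ (|x i - xbar|) :=
    Finset.sum_nonneg hΦi
  constructor
  · -- part 1
    intro k hk
    set E := (Finset.Icc 1 n).erase k with hE
    have hcardE : E.card = n - 1 := by rw [Finset.card_erase_of_mem hk, hcard]
    have hcardER : (E.card : ℝ) = (n:ℝ) - 1 := by
      rw [hcardE]; push_cast [Nat.cast_sub (by omega : 1 ≤ n)]; ring
    -- x k - xbar = - sum over E
    have hsplit : x k + ∑ i ∈ E, x i = ∑ i ∈ Finset.Icc 1 n, x i :=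
      Finset.add_sum_erase _ (fun i => x i) hk
    set M := ∑ i ∈ E, |x i - xbar| with hM
    have hMnn : 0 ≤ M := Finset.sum_nonneg fun i _ => abs_nonneg _
    have hukM : |x k - xbar| ≤ M := by
      have h1 : x k - xbar = -∑ i ∈ E, (x i - xbar) := by
        have h2 : ∑ i ∈ E, (x i - xbar) = (∑ i ∈ E, x i) - ((n:ℝ) - 1) * xbar := by
          rw [Finset.sum_sub_distrib, Finset.sum_const, ← hcardER, nsmul_eq_mul]
        rw [h2]
        have : (∑ i ∈ E, x i) = n * xbar - x k := by linarith [hsplit, hsum]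
        rw [this]; ring
      rw [h1, abs_neg]
      exact (Finset.abs_sum_le_sum_abs _ _).trans le_rfl
    set Q := ∑ i ∈ E, Φ (|x i - xbar|) with hQ
    have hQnn : 0 ≤ Q := Finset.sum_nonneg fun i hi =>
      hΦnonneg _ (Set.mem_Ici.mpr (abs_nonneg _))
    have hSsplit : Φ (|x k - xbar|) + Q = ∑ i ∈ Finset.Icc 1 n, Φ (|x i - xbar|) :=
      Finset.add_sum_erase _ (fun i => Φ (|x i - xbar|)) hk
    -- key : ((n:ℝ)-1) * Φ (|x k - xbar|) ≤ P * Q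
    have hkey : ((n:ℝ) - 1) * Φ (|x k - xbar|) ≤ P * Q := by
      rcases eq_or_lt_of_le hMnn with hM0 | hMpos
      · -- M = 0 ⟹ |x k - xbar| = 0
        have : |x k - xbar| = 0 := le_antisymm (by rw [← hM0] at hukM; exact hukM) (abs_nonneg _)
        rw [this, hΦ0]
        nlinarith
      · -- Jensen for Φ on E
        have hjen : Φ ((1 / ((n:ℝ) - 1)) * M) ≤ (1 / ((n:ℝ) - 1)) * Q := by
          have h := hΦconv.map_sum_le (t := E) (w := fun _ => 1 / ((n:ℝ) - 1))
            (p := fun i => |x i - xbar|)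
            (fun i _ => by positivity)
            (by rw [Finset.sum_const, nsmul_eq_mul, hcardER, mul_one_div,
                  div_self hn1pos.ne'])
            (fun i _ => Set.mem_Ici.mpr (abs_nonneg _))
          have e1 : ∑ i ∈ E, (1 / ((n:ℝ) - 1)) • |x i - xbar| = (1 / ((n:ℝ) - 1)) * M := by
            rw [hM, Finset.mul_sum]
            simp [smul_eq_mul]
          have e2 : ∑ i ∈ E, (1 / ((n:ℝ) - 1)) • Φ (|x i - xbar|)
              = (1 / ((n:ℝ) - 1)) * Q := by
            rw [hQ, Finset.mul_sum]
            simp [smul_eq_mul]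
          rw [e1, e2] at h
          exact h
        have hMdiv : 0 < (1 / ((n:ℝ) - 1)) * M := by positivity
        have hsub := hΦsub ((n:ℝ) - 1) ((1 / ((n:ℝ) - 1)) * M) hn1pos hMdiv
        have hMe : ((n:ℝ) - 1) * ((1 / ((n:ℝ) - 1)) * M) = M := by field_simp
        rw [hMe] at hsub
        have hmono : Φ (|x k - xbar|) ≤ Φ M :=
          hΦmono.monotoneOn (Set.mem_Ici.mpr (abs_nonneg _)) (Set.mem_Ici.mpr hMnn) hukM
        have h5 : Φ M ≤ P * ((1 / ((n:ℝ) - 1)) * Q) := by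
          calc Φ M ≤ P * Φ ((1 / ((n:ℝ) - 1)) * M) := hsub
            _ ≤ P * ((1 / ((n:ℝ) - 1)) * Q) := mul_le_mul_of_nonneg_left hjen hP.le
        have h6 : ((n:ℝ) - 1) * Φ M ≤ P * Q := by
          rw [mul_comm]
          calc Φ M * ((n:ℝ) - 1) ≤ (P * ((1 / ((n:ℝ) - 1)) * Q)) * ((n:ℝ) - 1) :=
                mul_le_mul_of_nonneg_right h5 hn1pos.le
            _ = P * Q := by field_simp
        nlinarith
    -- conclude
    have h7 : Φ (|x k - xbar|) * ((n:ℝ) - 1 + P) ≤ P * (Φ (|x k - xbar|) + Q) := by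
      nlinarith [hkey]
    have h8 : Φ (|x k - xbar|) ≤ P * (Φ (|x k - xbar|) + Q) / ((n:ℝ) - 1 + P) :=
      (le_div_iff₀ hden).mpr h7
    have hgen : ∀ u q : ℝ, ((n:ℝ) * P / ((n:ℝ) - 1 + P)) * ((1 / (n:ℝ)) * (u + q))
        = P * (u + q) / ((n:ℝ) - 1 + P) := by
      intro u q
      field_simp
    rw [← hSsplit, hgen]
    exact h8
  · -- part 2
    have hjen := uc_jensen a b Φ hΦ0 hΦnonneg f hf n hn x hx xbar hxbar
    apply mul_le_mul_of_nonneg_left _ hC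
    rw [hd]
    linarith
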